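/- Let X₁,...,X_k be independent standard normal random variables and Y = Σᵢ Xᵢ². Then for any ε > 0, P(Y - k ≥ 2√(kε) + 2ε) ≤ exp(-ε). -/

import Mathlib

open MeasureTheory ProbabilityTheory

open scoped NNReal ENNReal

section Aux
open Real

lemma LM_log {u : ℝ} (h0 : 0 ≤ u) (h1 : u < 1) :
    -Real.log (1 - u) ≤ u + u ^ 2 / (2 * (1 - u)) := by
  have habs : |u| < 1 := by rwa [abs_of_nonneg h0]
  have hsum := Real.hasSum_pow_div_log_of_abs_lt_one habs
  have hgeo : HasSum (fun n : ℕ => u ^ 2 / 2 * u ^ n) (u ^ 2 / 2 * (1 - u)⁻¹) :=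
    (hasSum_geometric_of_lt_one h0 h1).mul_left _
  set g : ℕ → ℝ := fun n => if n = 0 then u else u ^ (n + 1) / 2 with hgdef
  have hg1 : HasSum (fun n => g (n + 1)) (u ^ 2 / 2 * (1 - u)⁻¹) := by
    convert hgeo using 2 with n
    simp only [hgdef, Nat.succ_ne_zero, if_false]
    ring
  have hg : HasSum g (u ^ 2 / 2 * (1 - u)⁻¹ + g 0) := by
    have := (hasSum_nat_add_iff (f := g) 1).mp hg1
    simpa using this
  have hpt : ∀ n : ℕ, u ^ (n + 1) / (n + 1) ≤ g n := by
    intro n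
    cases n with
    | zero => simp [hgdef]
    | succ m =>
      simp only [hgdef, Nat.succ_ne_zero, if_false]
      apply div_le_div_of_nonneg_left (by positivity) two_pos
      push_cast; linarith
  have hle := hasSum_le hpt hsum hg
  simp only [hgdef, if_pos rfl] at hle
  have heq : u ^ 2 / 2 * (1 - u)⁻¹ = u ^ 2 / (2 * (1 - u)) := by
    rw [← div_eq_mul_inv, div_div]
  linarith [hle]

lemma gauss_density_eq (t : ℝ) :
    (fun x : ℝ => gaussianPDFReal 0 1 x * Real.exp (t * x ^ 2))
      = fun x : ℝ => (Real.sqrt (2 * π))⁻¹ * Real.exp (-(1/2 - t) * x ^ 2) := by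
  funext x
  have h1 : ((1:ℝ≥0):ℝ) = 1 := rfl
  simp only [gaussianPDFReal, h1, mul_one, sub_zero]
  rw [mul_assoc, ← Real.exp_add]
  congr 1
  ring

lemma gauss_smul_eq (t : ℝ) :
    (fun x : ℝ => (Real.toNNReal (gaussianPDFReal 0 1 x) : ℝ≥0) • Real.exp (t * x ^ 2))
      = fun x : ℝ => (Real.sqrt (2 * π))⁻¹ * Real.exp (-(1/2 - t) * x ^ 2) := by
  rw [← gauss_density_eq t]
  funext x
  simp [NNReal.smul_def, Real.coe_toNNReal _ (gaussianPDFReal_nonneg 0 1 x)]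

lemma gauss_exp_sq_integrable {t : ℝ} (ht : t < 1/2) :
    Integrable (fun x => Real.exp (t * x ^ 2)) (gaussianReal 0 1) := by
  rw [gaussianReal_of_var_ne_zero _ one_ne_zero]
  have hd : (gaussianPDF 0 1)
      = fun x => ((Real.toNNReal (gaussianPDFReal 0 1 x) : ℝ≥0) : ℝ≥0∞) := rfl
  rw [hd, integrable_withDensity_iff_integrable_smul
    ((measurable_gaussianPDFReal 0 1).real_toNNReal : Measurable fun x => Real.toNNReal (gaussianPDFReal 0 1 x)),
    gauss_smul_eq t]
  exact ((integrable_exp_neg_mul_sq (by linarith : (0:ℝ) < 1/2 - t)).const_mul _)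

lemma gauss_exp_sq_integral {t : ℝ} (ht : t < 1/2) :
    ∫ x, Real.exp (t * x ^ 2) ∂(gaussianReal 0 1) = (Real.sqrt (1 - 2 * t))⁻¹ := by
  rw [gaussianReal_of_var_ne_zero _ one_ne_zero]
  have hd : (gaussianPDF 0 1)
      = fun x => ((Real.toNNReal (gaussianPDFReal 0 1 x) : ℝ≥0) : ℝ≥0∞) := rfl
  rw [hd, integral_withDensity_eq_integral_smul
    ((measurable_gaussianPDFReal 0 1).real_toNNReal : Measurable fun x => Real.toNNReal (gaussianPDFReal 0 1 x)),
    gauss_smul_eq t, integral_const_mul, integral_gaussian]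
  have h1 : (0:ℝ) < 1/2 - t := by linarith
  rw [← Real.sqrt_inv, ← Real.sqrt_mul (by positivity), ← Real.sqrt_inv]
  congr 1
  rw [eq_comm, inv_eq_iff_eq_inv, eq_comm]
  field_simp

end Aux

/-- Laurent–Massart upper tail bound for chi-squared: if `X₁,...,X_k` are i.i.d. standard
normal then `P(Σᵢ Xᵢ² - k ≥ 2√(kε) + 2ε) ≤ exp(-ε)`. -/
theorem stmt_6 {Ω : Type*} [MeasurableSpace Ω] (μ : Measure Ω) [IsProbabilityMeasure μ]
    (k : ℕ) (X : Fin k → Ω → ℝ)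
    (hmeas : ∀ i, Measurable (X i))
    (hindep : iIndepFun X μ)
    (hgauss : ∀ i, μ.map (X i) = gaussianReal 0 1)
    (ε : ℝ) (hε : 0 < ε) :
    μ {ω | (k : ℝ) + (2 * Real.sqrt (k * ε) + 2 * ε) ≤ ∑ i, (X i ω) ^ 2}
      ≤ ENNReal.ofReal (Real.exp (-ε)) := by
  classical
  rcases Nat.eq_zero_or_pos k with hk | hk
  · subst hk
    have hset : {ω : Ω | ((0:ℕ) : ℝ) + (2 * Real.sqrt ((0:ℕ) * ε) + 2 * ε)
        ≤ ∑ i : Fin 0, (X i ω) ^ 2} = ∅ := by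
      ext ω
      simp only [Set.mem_setOf_eq, Set.mem_empty_iff_false, iff_false, not_le,
        Nat.cast_zero, zero_mul, Real.sqrt_zero, Finset.univ_eq_empty, Finset.sum_empty]
      linarith
    rw [hset]
    simp
  -- main case
  have hK : (0:ℝ) < (k:ℝ) := by exact_mod_cast hk
  set K := (k:ℝ) with hKdef
  set sk := Real.sqrt K with hskdef
  set se := Real.sqrt ε with hsedef
  have hsk : 0 < sk := Real.sqrt_pos.mpr hK
  have hse : 0 < se := Real.sqrt_pos.mpr hε
  have hsk2 : sk ^ 2 = K := Real.sq_sqrt hK.le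
  have hse2 : se ^ 2 = ε := Real.sq_sqrt hε.le
  have hKε : Real.sqrt (K * ε) = sk * se := Real.sqrt_mul hK.le ε
  have hden : 0 < sk + 2 * se := by linarith
  set t := se / (sk + 2 * se) with htdef
  have ht0 : 0 < t := div_pos hse hden
  have ht2 : t < 1/2 := by
    rw [htdef, div_lt_iff₀ hden]; linarith
  have h1t : 0 < 1 - 2 * t := by linarith
  set Y : Fin k → Ω → ℝ := fun i ω => X i ω ^ 2 with hYdef
  have hYmeas : ∀ i, Measurable (Y i) := fun i => (hmeas i).pow_const 2
  have hYindep : iIndepFun Y μ :=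
    hindep.comp (fun _ => fun x : ℝ => x ^ 2) (fun _ => measurable_id.pow_const 2)
  have hcont : ∀ i, AEStronglyMeasurable (fun x : ℝ => Real.exp (t * x ^ 2)) (μ.map (X i)) :=
    fun i => (Real.continuous_exp.comp (continuous_const.mul (continuous_pow 2))).aestronglyMeasurable
  have hint : ∀ i, Integrable (fun ω => Real.exp (t * Y i ω)) μ := by
    intro i
    have h := gauss_exp_sq_integrable ht2
    rw [← hgauss i] at h
    exact (integrable_map_measure (hcont i) (hmeas i).aemeasurable).mp h
  have hmgt : ∀ i, mgf (Y i) μ t = (Real.sqrt (1 - 2 * t))⁻¹ := by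
    intro i
    have h1 : mgf (Y i) μ t = ∫ x, Real.exp (t * x ^ 2) ∂(μ.map (X i)) :=
      (integral_map (hmeas i).aemeasurable (hcont i)).symm
    rw [h1, hgauss i, gauss_exp_sq_integral ht2]
  set a := K + (2 * Real.sqrt (K * ε) + 2 * ε) with hadef
  have hSint : Integrable (fun ω => Real.exp (t * (∑ i, Y i) ω)) μ :=
    hYindep.integrable_exp_mul_sum hYmeas (fun i _ => hint i)
  have hcher := measure_ge_le_exp_mul_mgf (μ := μ) (X := ∑ i, Y i) a ht0.le hSint
  rw [hYindep.mgf_sum hYmeas Finset.univ] at hcher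
  have hprod : ∏ i, mgf (Y i) μ t = ((Real.sqrt (1 - 2 * t))⁻¹) ^ k := by
    simp [hmgt]
  rw [hprod] at hcher
  have hbound : Real.exp (-t * a) * ((Real.sqrt (1 - 2 * t))⁻¹) ^ k ≤ Real.exp (-ε) := by
    have hsq : (Real.sqrt (1 - 2 * t))⁻¹ = Real.exp (-(Real.log (1 - 2 * t) / 2)) := by
      rw [← Real.exp_log (show (0:ℝ) < (Real.sqrt (1 - 2 * t))⁻¹ by positivity),
        Real.log_inv, Real.log_sqrt h1t.le]
    rw [hsq, ← Real.exp_nat_mul, ← Real.exp_add, Real.exp_le_exp, ← hKdef]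
    have hlog := LM_log (u := 2 * t) (by linarith) (by linarith)
    have hKt : K * (-(Real.log (1 - 2 * t))) ≤ K * (2 * t + (2 * t) ^ 2 / (2 * (1 - 2 * t))) :=
      mul_le_mul_of_nonneg_left hlog hK.le
    have h1tne : (1 : ℝ) - 2 * (se / (sk + 2 * se)) ≠ 0 := by
      rw [← htdef]; exact h1t.ne'
    have halg : -t * a + K * (2 * t + (2 * t) ^ 2 / (2 * (1 - 2 * t))) / 2 = -ε := by
      rw [hadef, hKε, ← hsk2, ← hse2, htdef]
      field_simp
      linear_combination (se * sk) * (mul_inv_cancel₀ hsk.ne')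
    linarith [hKt, halg]
  have hsets : {ω | K + (2 * Real.sqrt (K * ε) + 2 * ε) ≤ ∑ i, (X i ω) ^ 2}
      = {ω | a ≤ (∑ i, Y i) ω} := by
    ext ω
    simp only [Set.mem_setOf_eq, hadef, Finset.sum_apply]
    exact Iff.rfl
  rw [hsets, ENNReal.le_ofReal_iff_toReal_le (measure_ne_top μ _) (Real.exp_nonneg _)]
  exact hcher.trans hbound
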